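/- For every prime p and integer d ≥ 1, let G_1(d,p) be the graph whose vertices are the vectors v ∈ F_p^d with ⟨v,v⟩ ≠ 0, where two distinct vertices u, v are adjacent iff ⟨u,v⟩ ≠ 0. Then the minrank of G_1(d,p) over F_p equals d. -/

import Mathlib

/-- A matrix `M` over a field `F` represents a simple graph `G` if all diagonal entries are
nonzero and entries at distinct non-adjacent pairs of vertices are zero. -/
def Represents {V F : Type*} [Field F] (G : SimpleGraph V) (M : Matrix V V F) : Prop :=
  (∀ v, M v v ≠ 0) ∧ ∀ u v : V, u ≠ v → ¬G.Adj u v → M u v = 0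

/-- The minrank of a simple graph `G` over a field `F`. -/
noncomputable def minrank (F : Type*) [Field F] {V : Type*} [Fintype V] [DecidableEq V]
    (G : SimpleGraph V) : ℕ :=
  sInf {r : ℕ | ∃ M : Matrix V V F, Represents G M ∧ M.rank = r}

/-- The graph `G₁(d, p)`: vertices are the non-self-orthogonal vectors of `F_p^d`, with two
distinct vertices adjacent iff they are not orthogonal. -/
def orthoGraph (d p : ℕ) : SimpleGraph {v : Fin d → ZMod p // ∑ i, v i * v i ≠ 0} where
  Adj u v := u ≠ v ∧ ∑ i, u.1 i * v.1 i ≠ 0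
  symm := ⟨fun u v h => ⟨h.1.symm, by simpa [mul_comm] using h.2⟩⟩
  loopless := ⟨fun v h => h.1 rfl⟩

/-- For every prime `p` and `d ≥ 1`, the minrank of `G₁(d, p)` over `F_p` equals `d`. -/
theorem minrank_orthoGraph (p : ℕ) [Fact p.Prime] (d : ℕ) (hd : 1 ≤ d) :
    minrank (ZMod p) (orthoGraph d p) = d := by
  classical
  set V := {v : Fin d → ZMod p // ∑ i, v i * v i ≠ 0} with hV
  -- the standard basis vectors as vertices
  have hsingle : ∀ i : Fin d, ∑ j, (Pi.single i 1 : Fin d → ZMod p) j * (Pi.single i 1 : Fin d → ZMod p) j = 1 := by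
    intro i
    simp [Pi.single_apply]
  have hsingle2 : ∀ i k : Fin d, i ≠ k →
      ∑ j, (Pi.single i 1 : Fin d → ZMod p) j * (Pi.single k 1 : Fin d → ZMod p) j = 0 := by
    intro i k hik
    simp [Pi.single_apply, Ne.symm hik]
  let e : Fin d → V := fun i => ⟨Pi.single i 1, by rw [hsingle]; exact one_ne_zero⟩
  have he : Function.Injective e := by
    intro i j hij
    by_contra hne
    have := congrFun (congrArg Subtype.val hij) i
    simp [e, Pi.single_apply, Ne.symm hne] at this
  -- lower bound: any representing matrix has rank ≥ d
  have lower : ∀ M : Matrix V V (ZMod p), Represents (orthoGraph d p) M → d ≤ M.rank := by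
    intro M hM
    have hoff : ∀ i j : Fin d, i ≠ j → M (e i) (e j) = 0 := by
      intro i j hij
      refine hM.2 _ _ (fun h => hij (he h)) ?_
      intro hadj
      exact hadj.2 (hsingle2 i j hij)
    have hli : LinearIndependent (ZMod p) (fun i => M.submatrix e id i) := by
      rw [Fintype.linearIndependent_iff]
      intro c hc j
      have h0 := congrFun hc (e j)
      simp only [Finset.sum_apply, Pi.smul_apply, Matrix.submatrix_apply, id_eq,
        smul_eq_mul, Pi.zero_apply] at h0
      rw [Finset.sum_eq_single j (fun i _ hij => by rw [hoff i j hij, mul_zero])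
        (fun h => absurd (Finset.mem_univ j) h)] at h0
      exact (mul_eq_zero.mp h0).resolve_right (hM.1 (e j))
    have h1 : (M.submatrix e id).rank = d := by
      exact hli.rank_matrix.trans (Fintype.card_fin d)
    have hsub : Set.range (M.submatrix e id) ⊆ Set.range M := by
      rintro x ⟨j, rfl⟩
      exact ⟨e j, rfl⟩
    calc d = (M.submatrix e id).rank := h1.symm
      _ = Module.finrank (ZMod p) (Submodule.span (ZMod p) (Set.range (M.submatrix e id))) :=
          Matrix.rank_eq_finrank_span_row _
      _ ≤ Module.finrank (ZMod p) (Submodule.span (ZMod p) (Set.range M)) :=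
          Submodule.finrank_mono (Submodule.span_mono hsub)
      _ = M.rank := (Matrix.rank_eq_finrank_span_row M).symm
  -- the Gram matrix
  let G : Matrix V V (ZMod p) := fun u v => ∑ i, u.1 i * v.1 i
  have hGrep : Represents (orthoGraph d p) G := by
    constructor
    · intro v; exact v.2
    · intro u v huv hadj
      by_contra h
      exact hadj ⟨huv, h⟩
  have hGrank : G.rank ≤ d := by
    have hfac : G = (Matrix.of fun (u : V) i => u.1 i) *
        (Matrix.of fun i (v : V) => v.1 i) := by
      ext u v
      simp [G, Matrix.mul_apply]
    calc G.rank ≤ (Matrix.of fun (u : V) i => u.1 i).rank := by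
          rw [hfac]; exact Matrix.rank_mul_le_left _ _
      _ ≤ Fintype.card (Fin d) := Matrix.rank_le_card_width _
      _ = d := Fintype.card_fin d
  have hmem : G.rank ∈ {r : ℕ | ∃ M : Matrix V V (ZMod p),
      Represents (orthoGraph d p) M ∧ M.rank = r} := ⟨G, hGrep, rfl⟩
  refine le_antisymm ((Nat.sInf_le hmem).trans hGrank) ?_
  exact le_csInf ⟨_, hmem⟩ (fun r ⟨M, hM, hr⟩ => hr ▸ lower M hM)
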